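/- For every real number r and every complex number w with −1/2 < Re(w) < 0, one has Γ(2w+1)·Γ(−w+ir)/Γ(w+ir+1) + Γ(2w+1)·Γ(−w−ir)/Γ(w−ir+1) = (cosh(π r)/cos(π w)) · Γ(−w+ir)·Γ(−w−ir)/Γ(−2w). Equivalently, in terms of the beta function B, one has B(−w+ir, 2w+1) + B(−w−ir, 2w+1) = (cosh(π r)/cos(π w)) · B(−w+ir, −w−ir). -/

import Mathlib

open Complex

lemma gamma_beta_alg (p c C s1 s2 s3 G A B : ℂ) (hp : p ≠ 0) (hc : c ≠ 0)
    (h : s1 + s2 = C / c * s3) :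
    G * A / (p / (s2 * B)) + G * B / (p / (s1 * A)) = C / c * (A * B / (p / (s3 * G))) := by
  have h' : (s1 + s2) * c = C * s3 := by field_simp at h; linear_combination h
  rw [div_div_eq_mul_div, div_div_eq_mul_div, div_div_eq_mul_div]
  rw [← add_div]
  field_simp
  linear_combination (G * A * B) * h'

/-- Gamma-factor identity: for `r : ℝ` and `-1/2 < Re w < 0`,
`Γ(2w+1)Γ(−w+ir)/Γ(w+ir+1) + Γ(2w+1)Γ(−w−ir)/Γ(w−ir+1)
  = (cosh(πr)/cos(πw)) Γ(−w+ir)Γ(−w−ir)/Γ(−2w)`. -/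
theorem gamma_beta_identity (r : ℝ) (w : ℂ)
    (hw1 : -(1/2 : ℝ) < w.re) (hw2 : w.re < 0) :
    Complex.Gamma (2 * w + 1) * Complex.Gamma (-w + I * r) /
        Complex.Gamma (w + I * r + 1) +
      Complex.Gamma (2 * w + 1) * Complex.Gamma (-w - I * r) /
        Complex.Gamma (w - I * r + 1) =
      ((Real.cosh (Real.pi * r) : ℂ) / Complex.cos ((Real.pi : ℂ) * w)) *
        (Complex.Gamma (-w + I * r) * Complex.Gamma (-w - I * r) /
          Complex.Gamma (-2 * w)) := by
  have hπ : (Real.pi : ℂ) ≠ 0 := by exact_mod_cast Real.pi_ne_zero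
  have hsin : ∀ z : ℂ, 0 < z.re → z.re < 1 → Complex.sin ((Real.pi : ℂ) * z) ≠ 0 := by
    intro z h0 h1
    rw [Complex.sin_ne_zero_iff]
    intro k hk
    have hz : z = (k : ℂ) := mul_left_cancel₀ hπ (by rw [hk]; ring)
    have hre : z.re = (k : ℝ) := by rw [hz]; simp
    rw [hre] at h0 h1
    have hk1 : (0:ℤ) < k := by exact_mod_cast h0
    have hk2 : (1:ℝ) ≤ (k:ℝ) := by exact_mod_cast hk1
    linarith
  have key : ∀ z : ℂ, 0 < z.re → z.re < 1 → Complex.Gamma (1 - z) =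
      (Real.pi : ℂ) / (Complex.sin ((Real.pi : ℂ) * z) * Complex.Gamma z) := by
    intro z h0 h1
    have hG : Complex.Gamma z ≠ 0 := Complex.Gamma_ne_zero_of_re_pos h0
    have hs := hsin z h0 h1
    have h := Complex.Gamma_mul_Gamma_one_sub z
    field_simp at h ⊢
    linear_combination h
  have ha0 : (0:ℝ) < (-w + I * r).re := by simp; linarith
  have ha1 : (-w + I * r).re < 1 := by simp; linarith
  have hb0 : (0:ℝ) < (-w - I * r).re := by simp; linarith
  have hb1 : (-w - I * r).re < 1 := by simp; linarith
  have hc0 : (0:ℝ) < (2 * w + 1).re := by simp; linarith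
  have hc1 : (2 * w + 1).re < 1 := by simp; linarith
  have e1 : Complex.Gamma (w + I * r + 1) =
      (Real.pi : ℂ) / (Complex.sin ((Real.pi : ℂ) * (-w - I * r)) * Complex.Gamma (-w - I * r)) := by
    have h : w + I * r + 1 = 1 - (-w - I * r) := by ring
    rw [h]; exact key _ hb0 hb1
  have e2 : Complex.Gamma (w - I * r + 1) =
      (Real.pi : ℂ) / (Complex.sin ((Real.pi : ℂ) * (-w + I * r)) * Complex.Gamma (-w + I * r)) := by
    have h : w - I * r + 1 = 1 - (-w + I * r) := by ring
    rw [h]; exact key _ ha0 ha1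
  have e3 : Complex.Gamma (-2 * w) =
      (Real.pi : ℂ) / (Complex.sin ((Real.pi : ℂ) * (2 * w + 1)) * Complex.Gamma (2 * w + 1)) := by
    have h : -2 * w = 1 - (2 * w + 1) := by ring
    rw [h]; exact key _ hc0 hc1
  have hcos : Complex.cos ((Real.pi : ℂ) * w) ≠ 0 := by
    rw [Complex.cos_ne_zero_iff]
    intro k hk
    have hz : w = (k : ℂ) + 1/2 := mul_left_cancel₀ hπ (by rw [hk]; ring)
    have hre : w.re = (k : ℝ) + 1/2 := by rw [hz]; simp
    rw [hre] at hw1 hw2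
    have h1 : (-1:ℝ) < (k:ℝ) := by linarith
    have h2 : (-1:ℤ) < k := by exact_mod_cast h1
    have h3 : (0:ℤ) ≤ k := by omega
    have h4 : (0:ℝ) ≤ (k:ℝ) := by exact_mod_cast h3
    linarith
  have htrig : Complex.sin ((Real.pi : ℂ) * (-w + I * r)) + Complex.sin ((Real.pi : ℂ) * (-w - I * r))
      = (Real.cosh (Real.pi * r) : ℂ) / Complex.cos ((Real.pi : ℂ) * w) *
        Complex.sin ((Real.pi : ℂ) * (2 * w + 1)) := by
    have h1 : ((Real.pi : ℂ)) * (-w + I * r) = -((Real.pi : ℂ) * w) + ((Real.pi : ℂ) * r) * I := by ring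
    have h2 : ((Real.pi : ℂ)) * (-w - I * r) = -((Real.pi : ℂ) * w) - ((Real.pi : ℂ) * r) * I := by ring
    have h3 : ((Real.pi : ℂ)) * (2 * w + 1) = ((Real.pi : ℂ) * w) + ((Real.pi : ℂ) * w) + (Real.pi : ℂ) := by ring
    rw [h1, h2, h3, Complex.sin_add, Complex.sin_sub, Complex.sin_add, Complex.sin_add,
      Complex.cos_mul_I, Complex.sin_neg, Complex.cos_neg, Complex.sin_pi, Complex.cos_pi]
    have hch : (Real.cosh (Real.pi * r) : ℂ) = Complex.cosh ((Real.pi : ℂ) * r) := by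
      rw [Complex.ofReal_cosh]
      norm_cast
    rw [hch]
    field_simp
    ring
  rw [e1, e2, e3]
  exact gamma_beta_alg _ _ _ _ _ _ _ _ _ hπ hcos htrig
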